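/- General group-level identity under an orthonormal design: assume X^T X = I_p and let β̂^{ols} = X^T y. Then any minimizer β̂ of the LES objective Q satisfies, for every group k, Σ_{j=1}^{p_k} |β̂_{kj}| = Σ_{j : β̂_{kj} ≠ 0} |β̂^{ols}_{kj}| − nλα w_k · ( Σ_{j : β̂_{kj} ≠ 0} exp(α|β̂_{kj}|) ) / ( Σ_{l=1}^{p_k} exp(α|β̂_{kl}|) ). -/

import Mathlib

/-- **General group-level identity under an orthonormal design.**
Assume `XᵀX = I` and let `β̂ᵒˡˢ = Xᵀ y`.  Then any minimizer `β̂` of the LES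
objective `Q` satisfies, for every group `k`,
`∑ j, |β̂ kj| = ∑_{j : β̂ kj ≠ 0} |β̂ᵒˡˢ kj|
  - n λ α w k * (∑_{j : β̂ kj ≠ 0} exp (α |β̂ kj|)) / (∑ l, exp (α |β̂ kl|))`. -/
theorem les_group_identity (n K : ℕ) (hn : 0 < n) (hK : 0 < K)
    (p : Fin K → ℕ) (hp : ∀ k, 1 ≤ p k)
    (X : Fin n → (Σ k : Fin K, Fin (p k)) → ℝ) (y : Fin n → ℝ)
    (horth : ∀ j j' : Σ k : Fin K, Fin (p k),
      ∑ i : Fin n, X i j * X i j' = if j = j' then 1 else 0)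
    (βols : (Σ k : Fin K, Fin (p k)) → ℝ)
    (hols : ∀ j : Σ k : Fin K, Fin (p k), βols j = ∑ i : Fin n, X i j * y i)
    (lam α : ℝ) (hlam : 0 < lam) (hα : 0 < α)
    (w : Fin K → ℝ) (hw : ∀ k, 0 ≤ w k)
    (βh : (Σ k : Fin K, Fin (p k)) → ℝ)
    (hmin : IsMinOn
      (fun β : (Σ k : Fin K, Fin (p k)) → ℝ =>
        (1 / (2 * (n : ℝ))) * ∑ i : Fin n, (y i - ∑ j' : Σ k : Fin K, Fin (p k), X i j' * β j') ^ 2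
          + lam * ∑ l : Fin K, w l * Real.log (∑ j' : Fin (p l), Real.exp (α * |β ⟨l, j'⟩|)))
      Set.univ βh)
    (k : Fin K) (S : Finset (Fin (p k))) (hS : ∀ j, j ∈ S ↔ βh ⟨k, j⟩ ≠ 0) :
    ∑ j : Fin (p k), |βh ⟨k, j⟩| =
      (∑ j ∈ S, |βols ⟨k, j⟩|) - (n : ℝ) * lam * α * w k *
        ((∑ j ∈ S, Real.exp (α * |βh ⟨k, j⟩|)) /
          (∑ l : Fin (p k), Real.exp (α * |βh ⟨k, l⟩|))) := by
  classical
  set E : ℝ := ∑ l : Fin (p k), Real.exp (α * |βh ⟨k, l⟩|) with hEdef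
  have hEpos : 0 < E := by
    rw [hEdef]
    exact Finset.sum_pos (fun l _ => Real.exp_pos _) ⟨⟨0, hp k⟩, Finset.mem_univ _⟩
  clear_value E
  have hn' : (n : ℝ) ≠ 0 := Nat.cast_ne_zero.mpr hn.ne'
  have key : ∀ j ∈ S, |βh ⟨k, j⟩| =
      |βols ⟨k, j⟩| - (n : ℝ) * lam * α * w k * (Real.exp (α * |βh ⟨k, j⟩|) / E) := by
    intro j hj
    have hb : βh ⟨k, j⟩ ≠ 0 := (hS j).1 hj
    set idx : Σ k : Fin K, Fin (p k) := ⟨k, j⟩ with hidx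
    set b : ℝ := βh idx with hbdef
    set B : Fin n → ℝ := fun i => X i idx with hBdef
    set A : Fin n → ℝ := fun i =>
      (∑ j' : Σ k : Fin K, Fin (p k), X i j' * βh j') - B i * b with hAdef
    set C : ℝ := ∑ l ∈ Finset.univ.erase k,
      w l * Real.log (∑ j' : Fin (p l), Real.exp (α * |βh ⟨l, j'⟩|)) with hCdef
    clear_value C
    set g : ℝ → ℝ := fun t =>
      (1 / (2 * (n : ℝ))) * ∑ i : Fin n, (y i - (A i + B i * t)) ^ 2
        + lam * (w k * Real.log ((E - Real.exp (α * |b|)) + Real.exp (α * |t|)) + C) with hgdef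
    clear_value g
    -- the function value along the coordinate line
    have hupd : ∀ t : ℝ,
        (1 / (2 * (n : ℝ))) * ∑ i : Fin n,
            (y i - ∑ j' : Σ k : Fin K, Fin (p k), X i j' * Function.update βh idx t j') ^ 2
          + lam * ∑ l : Fin K, w l *
              Real.log (∑ j' : Fin (p l), Real.exp (α * |Function.update βh idx t ⟨l, j'⟩|))
          = g t := by
      intro t
      have hlin : ∀ i : Fin n,
          (∑ j' : Σ k : Fin K, Fin (p k), X i j' * Function.update βh idx t j')
            = A i + B i * t := by
        intro i
        have h1 : (∑ j' : Σ k : Fin K, Fin (p k), X i j' * Function.update βh idx t j')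
            = ∑ j' : Σ k : Fin K, Fin (p k),
                (X i j' * βh j' + (if j' = idx then X i idx * t - X i idx * b else 0)) := by
          apply Finset.sum_congr rfl
          intro j' _
          by_cases h : j' = idx
          · subst h
            rw [Function.update_self]
            simp [hbdef]
          · rw [Function.update_of_ne h]
            simp [h]
        rw [h1, Finset.sum_add_distrib, Finset.sum_ite_eq' Finset.univ idx]
        simp [hAdef, hBdef]
        ring
      have hgrpk : (∑ j' : Fin (p k), Real.exp (α * |Function.update βh idx t ⟨k, j'⟩|))
          = (E - Real.exp (α * |b|)) + Real.exp (α * |t|) := by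
        have h1 : ∀ j' : Fin (p k), Real.exp (α * |Function.update βh idx t ⟨k, j'⟩|)
            = Real.exp (α * |βh ⟨k, j'⟩|)
              + (if j' = j then Real.exp (α * |t|) - Real.exp (α * |b|) else 0) := by
          intro j'
          by_cases h : j' = j
          · subst h
            rw [show (⟨k, j'⟩ : Σ k : Fin K, Fin (p k)) = idx from rfl, Function.update_self]
            simp [hbdef, hidx]
          · rw [Function.update_of_ne (by simp [hidx, h])]
            simp [h]
        simp_rw [h1]
        rw [Finset.sum_add_distrib, Finset.sum_ite_eq' Finset.univ j]
        simp [hEdef]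
        ring
      have hlog : (∑ l : Fin K, w l *
            Real.log (∑ j' : Fin (p l), Real.exp (α * |Function.update βh idx t ⟨l, j'⟩|)))
          = w k * Real.log ((E - Real.exp (α * |b|)) + Real.exp (α * |t|)) + C := by
        rw [← Finset.add_sum_erase _ _ (Finset.mem_univ k), hgrpk]
        congr 1
        rw [hCdef]
        apply Finset.sum_congr rfl
        intro l hl
        have hlk : l ≠ k := Finset.ne_of_mem_erase hl
        congr 2
        apply Finset.sum_congr rfl
        intro j' _
        rw [Function.update_of_ne (by simp [hidx, hlk])]
      rw [hlog, hgdef]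
      simp only
      congr 2
      apply Finset.sum_congr rfl
      intro i _
      rw [hlin i]
    -- b is a local minimum of g
    have hglb : ∀ t : ℝ, g b ≤ g t := by
      intro t
      rw [← hupd t, ← hupd b]
      have hb' : Function.update βh idx b = βh := Function.update_eq_self idx βh
      rw [hb']
      exact isMinOn_iff.mp hmin _ (Set.mem_univ _)
    have hloc : IsLocalMin g b := Filter.Eventually.of_forall hglb
    -- derivative of g at b
    set s : ℝ := (SignType.sign b : ℝ) with hsdef
    have habs : HasDerivAt (fun t : ℝ => |t|) s b := hasDerivAt_abs hb
    have hexp : HasDerivAt (fun t : ℝ => Real.exp (α * |t|))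
        (Real.exp (α * |b|) * (α * s)) b := (habs.const_mul α).exp
    have hF : HasDerivAt (fun t : ℝ => (E - Real.exp (α * |b|)) + Real.exp (α * |t|))
        (Real.exp (α * |b|) * (α * s)) b := hexp.const_add _
    have hFb : (E - Real.exp (α * |b|)) + Real.exp (α * |b|) = E := by ring
    have hlogd : HasDerivAt
        (fun t : ℝ => Real.log ((E - Real.exp (α * |b|)) + Real.exp (α * |t|)))
        ((Real.exp (α * |b|) * (α * s)) / E) b := by
      have := hF.log (by rw [hFb]; exact ne_of_gt hEpos)
      rwa [hFb] at this
    have hquad : ∀ i : Fin n, HasDerivAt (fun t : ℝ => (y i - (A i + B i * t)) ^ 2)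
        (2 * (y i - (A i + B i * b)) * (-(B i))) b := by
      intro i
      have h1 : HasDerivAt (fun t : ℝ => y i - (A i + B i * t)) (-(B i)) b := by
        simpa using (((hasDerivAt_id b).const_mul (B i)).const_add (A i)).const_sub (y i)
      simpa using h1.fun_pow 2
    have hsum : HasDerivAt (fun t : ℝ => ∑ i : Fin n, (y i - (A i + B i * t)) ^ 2)
        (∑ i : Fin n, 2 * (y i - (A i + B i * b)) * (-(B i))) b :=
      HasDerivAt.fun_sum (fun i _ => hquad i)
    have hD : HasDerivAt g
        ((1 / (2 * (n : ℝ))) * ∑ i : Fin n, 2 * (y i - (A i + B i * b)) * (-(B i))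
          + lam * (w k * ((Real.exp (α * |b|) * (α * s)) / E))) b := by
      rw [hgdef]
      exact (hsum.const_mul _).add (((hlogd.const_mul (w k)).add_const C).const_mul lam)
    have hzero := hloc.hasDerivAt_eq_zero hD
    -- simplify the quadratic part of the derivative
    have h2 : ∑ i : Fin n, B i * y i = βols idx := by
      rw [hols idx]
    have h3 : ∑ i : Fin n, B i * (∑ j' : Σ k : Fin K, Fin (p k), X i j' * βh j') = b := by
      simp_rw [hBdef, Finset.mul_sum]
      rw [Finset.sum_comm]
      have hterm : ∀ j' : Σ k : Fin K, Fin (p k),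
          (∑ i : Fin n, X i idx * (X i j' * βh j')) = (if idx = j' then 1 else 0) * βh j' := by
        intro j'
        rw [show (∑ i : Fin n, X i idx * (X i j' * βh j'))
            = (∑ i : Fin n, X i idx * X i j') * βh j' by
          rw [Finset.sum_mul]; apply Finset.sum_congr rfl; intro i _; ring]
        rw [horth]
      simp_rw [hterm, ite_mul, one_mul, zero_mul]
      rw [Finset.sum_ite_eq]
      simp [hbdef]
    have hsimp : ∑ i : Fin n, 2 * (y i - (A i + B i * b)) * (-(B i))
        = 2 * b - 2 * βols idx := by
      have h1 : ∀ i : Fin n, A i + B i * b = ∑ j' : Σ k : Fin K, Fin (p k), X i j' * βh j' := by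
        intro i; rw [hAdef]; ring
      calc ∑ i : Fin n, 2 * (y i - (A i + B i * b)) * (-(B i))
          = ∑ i : Fin n,
              (2 * (B i * (∑ j' : Σ k : Fin K, Fin (p k), X i j' * βh j')) - 2 * (B i * y i)) := by
            apply Finset.sum_congr rfl; intro i _; rw [h1 i]; ring
        _ = 2 * b - 2 * βols idx := by
            rw [Finset.sum_sub_distrib, ← Finset.mul_sum, ← Finset.mul_sum, h3, h2]
    rw [hsimp] at hzero
    -- the nonnegative correction term
    set T : ℝ := (n : ℝ) * lam * α * w k * (Real.exp (α * |b|) / E) with hTdef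
    clear_value T
    have hT : 0 ≤ T := by
      rw [hTdef]
      exact mul_nonneg (mul_nonneg (mul_nonneg (mul_nonneg (Nat.cast_nonneg n) hlam.le)
        hα.le) (hw k)) (div_nonneg (Real.exp_pos _).le hEpos.le)
    have hE0 : E ≠ 0 := ne_of_gt hEpos
    have hols' : βols idx = b + s * T := by
      rw [hTdef]
      field_simp at hzero
      field_simp
      linear_combination (-1 : ℝ) * hzero
    rcases hb.lt_or_gt with hneg | hpos
    · have hs1 : s = -1 := by
        rw [hsdef, sign_neg hneg]; norm_num
      have hols'' : βols idx = b - T := by rw [hols', hs1]; ring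
      rw [abs_of_neg hneg,
        abs_of_neg (show βols idx < 0 by rw [hols'']; linarith), hols'']
      ring
    · have hs1 : s = 1 := by
        rw [hsdef, sign_pos hpos]; norm_num
      have hols'' : βols idx = b + T := by rw [hols', hs1]; ring
      rw [abs_of_pos hpos,
        abs_of_pos (show 0 < βols idx by rw [hols'']; linarith), hols'']
      ring
  -- assemble the group-level identity
  have h0 : ∑ j : Fin (p k), |βh ⟨k, j⟩| = ∑ j ∈ S, |βh ⟨k, j⟩| := by
    symm
    apply Finset.sum_subset (Finset.subset_univ S)
    intro x _ hx
    have hx0 : βh ⟨k, x⟩ = 0 := by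
      by_contra h
      exact hx ((hS x).2 h)
    simp [hx0]
  rw [h0, Finset.sum_congr rfl key, Finset.sum_sub_distrib]
  congr 1
  rw [← Finset.mul_sum, ← Finset.sum_div]
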